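/- Let X ∈ ℝ^{n×p} have columns x₁,…,xₚ, let y ∈ ℝⁿ be nonzero with {β ∈ ℝᵖ : βᵢ ≥ 0 for all i, Xβ = y} nonempty, and let α > 0 satisfy α·ξ(y; conv({x₁,…,xₚ})) > 1, where ξ(z; S) = inf{λ > 0 : z ∈ λ·S} is the gauge. Assume X and αy satisfy the vertex non-cover condition, and let T = {Σ_{i=1}^p λᵢ·(xᵢ − αy) : λᵢ ≥ 0}. Then for every global minimizer β* of β ↦ Σ_{i=1}^p βᵢ over {β ∈ ℝᵖ : βᵢ ≥ 0 for all i, Xβ = y} and every i ∈ [p] with β*ᵢ > 0, the vector xᵢ − αy generates an extreme ray of T. -/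

import Mathlib

open Finset Pointwise

noncomputable section


lemma extreme_combo {E : Type*} [AddCommGroup E] [Module ℝ E]
    (S : Set E) (e : E) (he : e ∈ Set.extremePoints ℝ (convexHull ℝ S))
    {ι : Type*} [DecidableEq ι] (t : Finset ι) (w : ι → ℝ) (z : ι → E)
    (hw : ∀ k ∈ t, 0 ≤ w k) (hw1 : ∑ k ∈ t, w k = 1)
    (hz : ∀ k ∈ t, z k ∈ S) (hsum : ∑ k ∈ t, w k • z k = e) :
    ∀ k ∈ t, 0 < w k → z k = e := by
  intro k hk hwk
  by_contra hne
  have hsplit : w k + ∑ l ∈ t.erase k, w l = 1 := by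
    rw [Finset.add_sum_erase t w hk]; exact hw1
  have hzsplit : w k • z k + ∑ l ∈ t.erase k, w l • z l = e := by
    rw [Finset.add_sum_erase t (fun l => w l • z l) hk]; exact hsum
  have hrest : ∑ l ∈ t.erase k, w l = 1 - w k := by linarith
  have hrest0 : (0:ℝ) ≤ 1 - w k := by
    rw [← hrest]; exact Finset.sum_nonneg fun l hl => hw l (Finset.mem_of_mem_erase hl)
  rcases eq_or_lt_of_le hrest0 with h1 | h1
  · -- w k = 1, all other weights zero
    have hz0 : ∀ l ∈ t.erase k, w l = 0 := by
      intro l hl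
      have := (Finset.sum_eq_zero_iff_of_nonneg
        (fun l hl => hw l (Finset.mem_of_mem_erase hl))).1 (by linarith)
      exact this l hl
    have : z k = e := by
      have hsz : ∑ l ∈ t.erase k, w l • z l = 0 :=
        Finset.sum_eq_zero fun l hl => by rw [hz0 l hl, zero_smul]
      have hwk1 : w k = 1 := by linarith
      rw [hsz, add_zero, hwk1, one_smul] at hzsplit
      exact hzsplit
    exact hne this
  · set r : ℝ := 1 - w k with hr
    set z' : E := r⁻¹ • ∑ l ∈ t.erase k, w l • z l with hz'
    have hz'mem : z' ∈ convexHull ℝ S := by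
      have := Finset.centerMass_mem_convexHull (t.erase k)
        (fun l hl => hw l (Finset.mem_of_mem_erase hl))
        (by rw [hrest]; exact h1)
        (fun l hl => hz l (Finset.mem_of_mem_erase hl))
      rwa [Finset.centerMass, hrest] at this
    have hseg : e ∈ openSegment ℝ (z k) z' := by
      refine ⟨w k, r, hwk, h1, by simp [hr], ?_⟩
      rw [hz', smul_inv_smul₀ (ne_of_gt h1)]
      exact hzsplit
    exact hne (he.2 (subset_convexHull ℝ S (hz k hk)) hz'mem hseg)

theorem stmt14_aux {n p : ℕ}
    (x : Fin p → EuclideanSpace ℝ (Fin n)) (y : EuclideanSpace ℝ (Fin n))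
    (hy : y ≠ 0)
    (α : ℝ) (hα : 0 < α)
    (hαξ : 1 < α * gauge (convexHull ℝ (Set.range x)) y)
    (hvnc : (∀ i, (α • y) ≠ x i) ∧
      Set.extremePoints ℝ (convexHull ℝ (Set.range x ∪ {α • y})) = Set.range x ∪ {α • y})
    (T : Set (EuclideanSpace ℝ (Fin n)))
    (hT : T = {v | ∃ lam : Fin p → ℝ, (∀ i, 0 ≤ lam i) ∧
      v = ∑ i, lam i • (x i - α • y)})
    (β : Fin p → ℝ) (hβ : ∀ i, 0 ≤ β i) (hXβ : ∑ i, β i • x i = y)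
    (hmin : ∀ γ : Fin p → ℝ, (∀ i, 0 ≤ γ i) → ∑ i, γ i • x i = y →
      ∑ i, β i ≤ ∑ i, γ i) :
    ∀ i, 0 < β i → (x i - α • y) ≠ 0 ∧ (x i - α • y) ∈ T ∧
      ∀ w₁ w₂, w₁ ∈ T → w₂ ∈ T → (x i - α • y) = w₁ + w₂ →
      (∃ c : ℝ, 0 ≤ c ∧ w₁ = c • (x i - α • y)) ∧
      (∃ c : ℝ, 0 ≤ c ∧ w₂ = c • (x i - α • y)) := by
  intro i hβi
  subst hT
  -- basic facts
  set s : ℝ := ∑ j, β j with hs_def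
  have hs_pos : 0 < s := lt_of_lt_of_le hβi (Finset.single_le_sum (fun j _ => hβ j) (mem_univ i))
  have hαs : 1 < α * s := by
    have hmem : y ∈ s • (convexHull ℝ (Set.range x) : Set (EuclideanSpace ℝ (Fin n))) := by
      refine Set.mem_smul_set.2 ⟨∑ j, (β j / s) • x j, ?_, ?_⟩
      · have := Finset.centerMass_mem_convexHull (Finset.univ : Finset (Fin p))
          (w := fun j => β j / s) (z := x)
          (fun j _ => div_nonneg (hβ j) hs_pos.le)
          (by rw [← Finset.sum_div]; positivity)
          (fun j _ => Set.mem_range_self j)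
        rwa [Finset.centerMass, ← Finset.sum_div, ← hs_def, div_self hs_pos.ne',
          inv_one, one_smul] at this
      · rw [Finset.smul_sum]
        rw [← hXβ]
        exact Finset.sum_congr rfl fun j _ => by
          rw [smul_smul, mul_div_cancel₀ _ hs_pos.ne']
    have hg : gauge (convexHull ℝ (Set.range x)) y ≤ s := gauge_le_of_mem hs_pos.le hmem
    calc 1 < α * gauge (convexHull ℝ (Set.range x)) y := hαξ
      _ ≤ α * s := by nlinarith [gauge_nonneg (s := convexHull ℝ (Set.range x)) y]
  refine ⟨sub_ne_zero_of_ne (Ne.symm (hvnc.1 i)), ?_, ?_⟩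
  · exact ⟨fun j => if j = i then 1 else 0, fun j => by positivity,
      by simp [ite_smul]⟩
  intro w₁ w₂ h1 h2 heq
  obtain ⟨lam, hlam, rfl⟩ := h1
  obtain ⟨mu, hmu, rfl⟩ := h2
  set ν : Fin p → ℝ := fun j => lam j + mu j with hν_def
  have hν0 : ∀ j, 0 ≤ ν j := fun j => add_nonneg (hlam j) (hmu j)
  set t : ℝ := ∑ j, ν j with ht_def
  have hrep : x i = ∑ j, ν j • x j + (1 - t) • (α • y) := by
    have h : x i - α • y = ∑ j, ν j • (x j - α • y) := by
      rw [heq, ← Finset.sum_add_distrib]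
      exact Finset.sum_congr rfl fun j _ => (add_smul _ _ _).symm
    have h2 : ∑ j, ν j • (x j - α • y) = ∑ j, ν j • x j - t • (α • y) := by
      rw [ht_def, Finset.sum_smul, ← Finset.sum_sub_distrib]
      exact Finset.sum_congr rfl fun j _ => smul_sub _ _ _
    rw [h2] at h
    have := sub_eq_iff_eq_add.mp h
    rw [this]; module
  rcases le_or_gt t 1 with ht1 | ht1
  · -- use extreme point property
    have hxext : x i ∈ Set.extremePoints ℝ (convexHull ℝ (Set.range x ∪ {α • y})) := by
      rw [hvnc.2]; exact Set.mem_union_left _ ⟨i, rfl⟩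
    have hkey := extreme_combo (Set.range x ∪ {α • y}) (x i) hxext
      (Finset.univ : Finset (Option (Fin p)))
      (fun o => o.elim (1 - t) ν) (fun o => o.elim (α • y) x)
      (fun o _ => by cases o with
        | none => simpa using sub_nonneg.2 ht1
        | some j => exact hν0 j)
      (by rw [Fintype.sum_option]; simp [← ht_def])
      (fun o _ => by cases o with
        | none => exact Set.mem_union_right _ rfl
        | some j => exact Set.mem_union_left _ ⟨j, rfl⟩)
      (by rw [Fintype.sum_option]; simp only [Option.elim]
          rw [hrep]; exact add_comm _ _)
    have hxj : ∀ j, 0 < ν j → x j = x i := fun j hj =>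
      hkey (some j) (mem_univ _) hj
    constructor
    · refine ⟨∑ j, lam j, Finset.sum_nonneg fun j _ => hlam j, ?_⟩
      rw [Finset.sum_smul]
      refine Finset.sum_congr rfl fun j _ => ?_
      rcases eq_or_lt_of_le (hlam j) with h0 | h0
      · rw [← h0, zero_smul, zero_smul]
      · rw [hxj j (lt_of_lt_of_le h0 (le_add_of_nonneg_right (hmu j)))]
    · refine ⟨∑ j, mu j, Finset.sum_nonneg fun j _ => hmu j, ?_⟩
      rw [Finset.sum_smul]
      refine Finset.sum_congr rfl fun j _ => ?_
      rcases eq_or_lt_of_le (hmu j) with h0 | h0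
      · rw [← h0, zero_smul, zero_smul]
      · rw [hxj j (lt_of_lt_of_le h0 (le_add_of_nonneg_left (hlam j)))]
  · -- t > 1 : contradiction with minimality
    exfalso
    set d : ℝ := α * (t - 1) with hd_def
    have hd_pos : 0 < d := mul_pos hα (by linarith)
    have hd : ∑ j, ν j • x j - x i = d • y := by
      have := hrep
      rw [hd_def]
      have h2 : (α * (t-1)) • y = (t - 1) • (α • y) := by
        rw [smul_smul]; ring_nf
      rw [h2]
      have : x i - ∑ j, ν j • x j = (1 - t) • (α • y) := by
        rw [hrep]; module
      rw [show (t - 1 : ℝ) = -(1 - t) by ring, neg_smul, ← this]; module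
    obtain ⟨θ, hθ_pos, hθ_le1, hγi⟩ :
        ∃ θ : ℝ, 0 < θ ∧ θ ≤ 1 ∧ 0 ≤ (1 - θ) * β i + θ * (d⁻¹ * (ν i - 1)) := by
      rcases le_or_gt 1 (ν i) with hν1 | hν1
      · refine ⟨1, one_pos, le_refl 1, ?_⟩
        have h1 : 0 ≤ d⁻¹ * (ν i - 1) := by
          apply mul_nonneg (inv_nonneg.2 hd_pos.le); linarith
        nlinarith
      · set e : ℝ := d⁻¹ * (1 - ν i) with he_def
        have he_pos : 0 < e := by
          apply mul_pos (inv_pos.2 hd_pos); linarith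
        refine ⟨β i / (β i + e), by positivity, ?_, ?_⟩
        · rw [div_le_one (by positivity)]; linarith
        · have hkey : (1 - β i / (β i + e)) * β i + β i / (β i + e) * (d⁻¹ * (ν i - 1))
              = 0 := by
            have hne : β i + e ≠ 0 := by positivity
            have h2 : d⁻¹ * (ν i - 1) = -e := by rw [he_def]; ring
            rw [h2]
            field_simp
            ring
          rw [hkey]
    set γ : Fin p → ℝ := fun j => (1 - θ) * β j + θ * (d⁻¹ * (ν j - if j = i then 1 else 0))
      with hγ_def
    have hγ0 : ∀ j, 0 ≤ γ j := by
      intro j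
      rw [hγ_def]
      by_cases hji : j = i
      · subst hji
        simpa only [if_pos rfl, if_true] using hγi
      · simp only [if_neg hji, sub_zero]
        refine add_nonneg (mul_nonneg (by linarith) (hβ j)) ?_
        exact mul_nonneg hθ_pos.le (mul_nonneg (inv_nonneg.2 hd_pos.le) (hν0 j))
    have hγx : ∑ j, γ j • x j = y := by
      have e1 : ∀ j, γ j • x j = ((1-θ) * β j) • x j + (θ * d⁻¹) • (ν j • x j)
          - (θ * d⁻¹ * (if j = i then (1:ℝ) else 0)) • x j := by
        intro j
        rw [hγ_def]
        simp only []
        rw [smul_smul]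
        module
      rw [Finset.sum_congr rfl fun j _ => e1 j]
      rw [Finset.sum_sub_distrib, Finset.sum_add_distrib]
      have e2 : ∑ j, ((1-θ) * β j) • x j = (1-θ) • y := by
        rw [← hXβ, Finset.smul_sum]
        exact Finset.sum_congr rfl fun j _ => by rw [smul_smul]
      have e3 : ∑ j, (θ * d⁻¹) • (ν j • x j) = (θ * d⁻¹) • (d • y + x i) := by
        rw [← Finset.smul_sum]
        congr 1
        rw [← hd]; module
      have e4 : ∑ j, (θ * d⁻¹ * (if j = i then (1:ℝ) else 0)) • x j
          = (θ * d⁻¹) • x i := by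
        simp [mul_ite, ite_smul]
      rw [e2, e3, e4]
      have hdd : θ * d⁻¹ * d = θ := by field_simp
      rw [smul_add, smul_smul, hdd]
      module
    have hγsum : ∑ j, γ j = (1 - θ) * s + θ * (d⁻¹ * (t - 1)) := by
      have h5 : ∑ j, (ν j - if j = i then (1:ℝ) else 0) = t - 1 := by
        rw [Finset.sum_sub_distrib, ← ht_def]
        simp
      simp only [hγ_def]
      rw [Finset.sum_add_distrib, ← Finset.mul_sum, ← Finset.mul_sum, ← Finset.mul_sum,
        h5, ← hs_def]
    have ht1' : t - 1 ≠ 0 := by linarith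
    have hdinv : d⁻¹ * (t - 1) = α⁻¹ := by
      rw [hd_def, mul_inv, mul_assoc, inv_mul_cancel₀ ht1', mul_one]
    have hlt : ∑ j, γ j < s := by
      rw [hγsum, hdinv]
      have hsα : α⁻¹ < s := by
        rw [inv_lt_iff_one_lt_mul₀ hα]
        linarith [hαs]
      nlinarith
    exact absurd (hmin γ hγ0 hγx) (not_le.2 hlt)


/-- A nonzero vector `w` generates an extreme ray of the convex cone `T`. -/
def GeneratesExtremeRay {E : Type*} [AddCommGroup E] [Module ℝ E]
    (T : Set E) (w : E) : Prop :=
  w ≠ 0 ∧ w ∈ T ∧ ∀ w₁ w₂, w₁ ∈ T → w₂ ∈ T → w = w₁ + w₂ →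
    (∃ c : ℝ, 0 ≤ c ∧ w₁ = c • w) ∧ (∃ c : ℝ, 0 ≤ c ∧ w₂ = c • w)

/-- `X` (with columns `x i`) and the point `v` satisfy the vertex non-cover condition. -/
def VertexNonCover {E : Type*} [AddCommGroup E] [Module ℝ E] {p : ℕ}
    (x : Fin p → E) (v : E) : Prop :=
  (∀ i, v ≠ x i) ∧
    Set.extremePoints ℝ (convexHull ℝ (Set.range x ∪ {v})) = Set.range x ∪ {v}

theorem stmt14 {n p : ℕ}
    (x : Fin p → EuclideanSpace ℝ (Fin n)) (y : EuclideanSpace ℝ (Fin n))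
    (hy : y ≠ 0)
    (α : ℝ) (hα : 0 < α)
    (hαξ : 1 < α * gauge (convexHull ℝ (Set.range x)) y)
    (hvnc : VertexNonCover x (α • y))
    (T : Set (EuclideanSpace ℝ (Fin n)))
    (hT : T = {v | ∃ lam : Fin p → ℝ, (∀ i, 0 ≤ lam i) ∧
      v = ∑ i, lam i • (x i - α • y)})
    (β : Fin p → ℝ) (hβ : ∀ i, 0 ≤ β i) (hXβ : ∑ i, β i • x i = y)
    (hmin : ∀ γ : Fin p → ℝ, (∀ i, 0 ≤ γ i) → ∑ i, γ i • x i = y →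
      ∑ i, β i ≤ ∑ i, γ i) :
    ∀ i, 0 < β i → GeneratesExtremeRay T (x i - α • y) := by
  intro i hβi
  exact stmt14_aux x y hy α hα hαξ hvnc T hT β hβ hXβ hmin i hβi
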